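/- Let (A, m) be a separated local ring (⋂_n m^n = 0) and q(t) ∈ A[t] a Weierstrass polynomial of degree d. Then q is a regular element (non zero-divisor) in both A[t] and A[[t]]. -/

import Mathlib

open IsLocalRing Polynomial

/-- A Weierstrass polynomial of degree `d` over a local ring: a monic polynomial of
degree `d` all of whose non-leading coefficients lie in the maximal ideal. -/
def IsWeierstrassPolynomial {A : Type*} [CommRing A] [IsLocalRing A]
    (q : Polynomial A) (d : ℕ) : Prop :=
  q.Monic ∧ q.natDegree = d ∧ ∀ i < d, q.coeff i ∈ maximalIdeal A

/-- If `(A, m)` is a separated local ring (`⋂ₙ mⁿ = 0`) and `q` a Weierstrass polynomial of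
degree `d`, then `q` is a non zero-divisor in both `A[t]` and `A[[t]]`. -/
theorem weierstrass_polynomial_regular {A : Type*} [CommRing A] [IsLocalRing A]
    (hsep : (⨅ n : ℕ, (maximalIdeal A) ^ n) = ⊥)
    {d : ℕ} {q : Polynomial A} (hq : IsWeierstrassPolynomial q d) :
    q ∈ nonZeroDivisors (Polynomial A) ∧
      (q : PowerSeries A) ∈ nonZeroDivisors (PowerSeries A) := by
  obtain ⟨hmon, hdeg, hcoef⟩ := hq
  refine ⟨hmon.mem_nonZeroDivisors, ?_⟩
  rw [mem_nonZeroDivisors_iff_right]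
  intro f hf
  rw [mul_comm] at hf
  have key : ∀ n k, PowerSeries.coeff k f ∈ (maximalIdeal A) ^ n := by
    intro n
    induction n with
    | zero => intro k; simp
    | succ n ih =>
      intro k
      have hc : PowerSeries.coeff (d + k) ((q : PowerSeries A) * f) = 0 := by
        rw [hf]; simp
      rw [PowerSeries.coeff_mul] at hc
      have hmem : ((d : ℕ), k) ∈ Finset.HasAntidiagonal.antidiagonal (d + k) := by
        simp
      rw [← Finset.add_sum_erase _ _ hmem] at hc
      have hqd : (PowerSeries.coeff d) (q : PowerSeries A) = 1 := by
        rw [Polynomial.coeff_coe, ← hdeg]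
        exact hmon.coeff_natDegree
      rw [hqd, one_mul] at hc
      have : PowerSeries.coeff k f =
          -∑ p ∈ (Finset.HasAntidiagonal.antidiagonal (d + k)).erase (d, k),
            (PowerSeries.coeff p.1) (q : PowerSeries A) * (PowerSeries.coeff p.2) f := by
        exact eq_neg_of_add_eq_zero_left hc
      rw [this]
      apply neg_mem
      apply Submodule.sum_mem
      intro p hp
      have hpadd : p.1 + p.2 = d + k := Finset.HasAntidiagonal.mem_antidiagonal.mp (Finset.mem_of_mem_erase hp)
      have hpne : p ≠ (d, k) := Finset.ne_of_mem_erase hp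
      rw [Polynomial.coeff_coe]
      rcases lt_trichotomy p.1 d with h1 | h1 | h1
      · -- q.coeff p.1 ∈ m, coeff f ∈ m^n
        rw [pow_succ']
        exact Ideal.mul_mem_mul (hcoef p.1 h1) (ih p.2)
      · exfalso
        apply hpne
        have : p.2 = k := by omega
        exact Prod.ext h1 this
      · have : q.coeff p.1 = 0 := by
          apply Polynomial.coeff_eq_zero_of_natDegree_lt
          omega
        rw [this, zero_mul]
        exact Submodule.zero_mem _
  ext k
  have hk : PowerSeries.coeff k f ∈ (⊥ : Ideal A) := by
    rw [← hsep]
    exact Ideal.mem_iInf.mpr fun n => key n k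
  rw [Ideal.mem_bot] at hk
  simpa using hk
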